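/- Let f, g : \mathbb{D} \to [0,1] be measurable functions. Then for every R > 1 and all z, w \in \mathbb{C} with |z| \geq R and |w| \geq R, |E_f(z,\bar{w}) - E_g(z,\bar{w})| \leq C_3(R)\, \|f - g\|_1, where C_3(R) = (2/(\pi (R-1)^2))\, \exp( 4/(\pi (R-1)^2) ) and \|f-g\|_1 = \int_{\mathbb{D}} |f - g|\, dA. -/

import Mathlib

open MeasureTheory

/-- The polarized exponential transform
`E_f(z, w̄) = exp(-(1/π) ∫_𝔻 f(ζ)/((ζ-z)(ζ̄-w̄)) dA(ζ))` of a shade function `f` on the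
unit disk. -/
noncomputable def Epol (f : ℂ → ℝ) (z w : ℂ) : ℂ :=
  Complex.exp (-(1 / Real.pi : ℝ) *
    ∫ ζ in Metric.ball (0 : ℂ) 1,
      (f ζ : ℂ) / ((ζ - z) * ((starRingEnd ℂ) ζ - (starRingEnd ℂ) w)))

/-- Mean value inequality for the complex exponential on a ball. -/
lemma exp_lip {a b : ℂ} {M : ℝ} (ha : ‖a‖ ≤ M) (hb : ‖b‖ ≤ M) :
    ‖Complex.exp a - Complex.exp b‖ ≤ Real.exp M * ‖a - b‖ := by
  have hconv : Convex ℝ (Metric.closedBall (0 : ℂ) M) := convex_closedBall _ _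
  refine hconv.norm_image_sub_le_of_norm_deriv_le (f := Complex.exp)
    (fun x _ => Complex.differentiable_exp x) ?_
    (Metric.mem_closedBall.2 (by simpa using hb)) (Metric.mem_closedBall.2 (by simpa using ha))
  intro x hx
  rw [Complex.deriv_exp]
  have : ‖Complex.exp x‖ = Real.exp x.re := Complex.norm_exp x
  rw [this]
  refine Real.exp_le_exp.2 (le_trans (le_abs_self _) ((Complex.abs_re_le_norm x).trans ?_))
  simpa using Metric.mem_closedBall.1 hx

/-- Lipschitz continuity of the polarized exponential transform:
`|E_f(z,w̄) - E_g(z,w̄)| ≤ C₃(R) ‖f - g‖₁` for `|z|, |w| ≥ R > 1`, where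
`C₃(R) = (2/(π(R-1)²)) exp(4/(π(R-1)²))`. -/
theorem Epol_diff_bound (f g : ℂ → ℝ) (hf : Measurable f) (hg : Measurable g)
    (hf01 : ∀ z ∈ Metric.ball (0 : ℂ) 1, f z ∈ Set.Icc (0 : ℝ) 1)
    (hg01 : ∀ z ∈ Metric.ball (0 : ℂ) 1, g z ∈ Set.Icc (0 : ℝ) 1)
    (R : ℝ) (hR : 1 < R) (z w : ℂ)
    (hz : R ≤ ‖z‖) (hw : R ≤ ‖w‖) :
    ‖Epol f z w - Epol g z w‖ ≤
      2 / (Real.pi * (R - 1) ^ 2) * Real.exp (4 / (Real.pi * (R - 1) ^ 2)) *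
        ∫ ζ in Metric.ball (0 : ℂ) 1, |f ζ - g ζ| := by
  have hπ : (0:ℝ) < Real.pi := Real.pi_pos
  have hR1 : (0:ℝ) < R - 1 := by linarith
  have hd : (0:ℝ) < (R - 1) ^ 2 := by positivity
  set S : Set ℂ := Metric.ball (0 : ℂ) 1 with hS
  have hSm : MeasurableSet S := measurableSet_ball
  haveI : IsFiniteMeasure (volume.restrict S) :=
    ⟨by rw [Measure.restrict_apply_univ]; exact measure_ball_lt_top⟩
  -- denominator lower bound
  have hden : ∀ ζ ∈ S, (R - 1) ^ 2 ≤
      ‖(ζ - z) * ((starRingEnd ℂ) ζ - (starRingEnd ℂ) w)‖ := by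
    intro ζ hζ
    have hζ1 : ‖ζ‖ < 1 := by simpa [hS, Complex.dist_eq] using hζ
    have h1 : R - 1 ≤ ‖ζ - z‖ := by
      have h := norm_sub_norm_le z ζ
      have h2 : ‖z - ζ‖ = ‖ζ - z‖ := by
        exact norm_sub_rev z ζ
      linarith
    have h2 : R - 1 ≤ ‖(starRingEnd ℂ) ζ - (starRingEnd ℂ) w‖ := by
      rw [← map_sub, Complex.norm_conj]
      have h := norm_sub_norm_le w ζ
      have h2 : ‖w - ζ‖ = ‖ζ - w‖ := by
        exact norm_sub_rev w ζ
      linarith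
    rw [norm_mul, sq]
    exact mul_le_mul h1 h2 hR1.le (norm_nonneg _)
  -- pointwise bound on integrands
  have hptw : ∀ (h : ℂ → ℝ) (c : ℝ), 0 ≤ c → (∀ ζ ∈ S, |h ζ| ≤ c) → ∀ ζ ∈ S,
      ‖(h ζ : ℂ) / ((ζ - z) * ((starRingEnd ℂ) ζ - (starRingEnd ℂ) w))‖ ≤ c / (R - 1) ^ 2 := by
    intro h c hc hb ζ hζ
    rw [norm_div, Complex.norm_real]
    exact div_le_div₀ hc (hb ζ hζ) hd (hden ζ hζ)
  -- measurability of integrands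
  have hmeas : ∀ (h : ℂ → ℝ), Measurable h → Measurable (fun ζ =>
      (h ζ : ℂ) / ((ζ - z) * ((starRingEnd ℂ) ζ - (starRingEnd ℂ) w))) := by
    intro h hh
    exact (Complex.measurable_ofReal.comp hh).div
      ((measurable_id.sub measurable_const).mul
        ((Complex.continuous_conj.measurable).sub measurable_const))
  -- integrability
  have hint : ∀ (h : ℂ → ℝ), Measurable h → (∀ ζ ∈ S, |h ζ| ≤ 1) →
      Integrable (fun ζ => (h ζ : ℂ) / ((ζ - z) * ((starRingEnd ℂ) ζ - (starRingEnd ℂ) w)))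
        (volume.restrict S) := by
    intro h hh hb
    refine ⟨(hmeas h hh).aestronglyMeasurable, ?_⟩
    apply HasFiniteIntegral.of_bounded (C := 1 / (R - 1) ^ 2)
    filter_upwards [ae_restrict_mem hSm] with ζ hζ
    exact hptw h 1 zero_le_one hb ζ hζ
  have hfb : ∀ ζ ∈ S, |f ζ| ≤ 1 := fun ζ hζ =>
    abs_le.2 ⟨by linarith [(hf01 ζ hζ).1], (hf01 ζ hζ).2⟩
  have hgb : ∀ ζ ∈ S, |g ζ| ≤ 1 := fun ζ hζ =>
    abs_le.2 ⟨by linarith [(hg01 ζ hζ).1], (hg01 ζ hζ).2⟩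
  set F := fun ζ => (f ζ : ℂ) / ((ζ - z) * ((starRingEnd ℂ) ζ - (starRingEnd ℂ) w)) with hF
  set G := fun ζ => (g ζ : ℂ) / ((ζ - z) * ((starRingEnd ℂ) ζ - (starRingEnd ℂ) w)) with hG
  have hIF : Integrable F (volume.restrict S) := hint f hf hfb
  have hIG : Integrable G (volume.restrict S) := hint g hg hgb
  set a : ℂ := (-(1 / Real.pi : ℝ) : ℂ) * ∫ ζ in S, F ζ with ha
  set b : ℂ := (-(1 / Real.pi : ℝ) : ℂ) * ∫ ζ in S, G ζ with hb
  -- norm bounds on a and b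
  have habs : ∀ (h : ℂ → ℝ), Measurable h → (∀ ζ ∈ S, |h ζ| ≤ 1) →
      ‖∫ ζ in S, (h ζ : ℂ) / ((ζ - z) * ((starRingEnd ℂ) ζ - (starRingEnd ℂ) w))‖ ≤
        Real.pi / (R - 1) ^ 2 := by
    intro h hh hb'
    have := norm_integral_le_of_norm_le_const (μ := volume.restrict S)
      (f := fun ζ => (h ζ : ℂ) / ((ζ - z) * ((starRingEnd ℂ) ζ - (starRingEnd ℂ) w)))
      (C := 1 / (R - 1) ^ 2) ?_
    · refine this.trans ?_
      have hvol : ((volume.restrict S) Set.univ).toReal = Real.pi := by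
        rw [Measure.restrict_apply_univ, hS, Complex.volume_ball]
        simp [ENNReal.toReal_mul]
      rw [measureReal_def, hvol, div_mul_eq_mul_div, one_mul]
    · filter_upwards [ae_restrict_mem hSm] with ζ hζ
      exact hptw h 1 zero_le_one hb' ζ hζ
  have hM : ∀ c : ℂ, ‖c‖ ≤ Real.pi / (R - 1) ^ 2 →
      ‖(-(1 / Real.pi : ℝ) : ℂ) * c‖ ≤ 1 / (R - 1) ^ 2 := by
    intro c hc
    rw [norm_mul]
    have h1 : ‖(-(1 / Real.pi : ℝ) : ℂ)‖ = 1 / Real.pi := by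
      rw [norm_neg, Complex.norm_real, Real.norm_eq_abs, abs_of_pos (by positivity)]
    rw [h1]
    calc (1 / Real.pi) * ‖c‖ ≤ (1 / Real.pi) * (Real.pi / (R - 1) ^ 2) := by
          exact mul_le_mul_of_nonneg_left hc (by positivity)
      _ = 1 / (R - 1) ^ 2 := by field_simp
  have haM : ‖a‖ ≤ 1 / (R - 1) ^ 2 := hM _ (habs f hf hfb)
  have hbM : ‖b‖ ≤ 1 / (R - 1) ^ 2 := hM _ (habs g hg hgb)
  -- bound on ‖a - b‖
  have hL0 : (0:ℝ) ≤ ∫ ζ in S, |f ζ - g ζ| :=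
    integral_nonneg fun ζ => abs_nonneg _
  have hfg_int : Integrable (fun ζ => |f ζ - g ζ|) (volume.restrict S) := by
    refine ⟨((hf.sub hg).abs).aestronglyMeasurable, ?_⟩
    apply HasFiniteIntegral.of_bounded (C := 2)
    filter_upwards [ae_restrict_mem hSm] with ζ hζ
    rw [Real.norm_eq_abs, abs_abs]
    have h1 := hf01 ζ hζ; have h2 := hg01 ζ hζ
    rw [abs_le]
    constructor <;> [linarith [h1.1, h2.2]; linarith [h1.2, h2.1]]
  have hab : ‖a - b‖ ≤ 1 / (Real.pi * (R - 1) ^ 2) * ∫ ζ in S, |f ζ - g ζ| := by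
    have h1 : a - b = (-(1 / Real.pi : ℝ) : ℂ) * ((∫ ζ in S, F ζ) - ∫ ζ in S, G ζ) := by
      rw [ha, hb]; ring
    rw [h1, norm_mul]
    have h2 : ‖(-(1 / Real.pi : ℝ) : ℂ)‖ = 1 / Real.pi := by
      rw [norm_neg, Complex.norm_real, Real.norm_eq_abs, abs_of_pos (by positivity)]
    rw [h2, ← integral_sub hIF hIG]
    have h3 : ‖∫ ζ in S, (F ζ - G ζ)‖ ≤ ∫ ζ in S, ‖F ζ - G ζ‖ :=
      norm_integral_le_integral_norm _
    have h4 : ∫ ζ in S, ‖F ζ - G ζ‖ ≤ ∫ ζ in S, (1 / (R - 1) ^ 2) * |f ζ - g ζ| := by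
      refine integral_mono_ae (hIF.sub hIG).norm (hfg_int.const_mul _) ?_
      filter_upwards [ae_restrict_mem hSm] with ζ hζ
      have : F ζ - G ζ = ((f ζ - g ζ : ℝ) : ℂ) /
          ((ζ - z) * ((starRingEnd ℂ) ζ - (starRingEnd ℂ) w)) := by
        rw [hF, hG]; push_cast; ring
      rw [this]
      have := hptw (fun ζ => f ζ - g ζ) |f ζ - g ζ| (abs_nonneg _)
      calc ‖((f ζ - g ζ : ℝ) : ℂ) / ((ζ - z) * ((starRingEnd ℂ) ζ - (starRingEnd ℂ) w))‖
          ≤ |f ζ - g ζ| / (R - 1) ^ 2 := by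
            rw [norm_div, Complex.norm_real]
            exact div_le_div₀ (abs_nonneg _) le_rfl hd (hden ζ hζ)
        _ = (1 / (R - 1) ^ 2) * |f ζ - g ζ| := by ring
      done
    rw [integral_const_mul] at h4
    calc (1 / Real.pi) * ‖∫ ζ in S, (F ζ - G ζ)‖
        ≤ (1 / Real.pi) * ((1 / (R - 1) ^ 2) * ∫ ζ in S, |f ζ - g ζ|) := by
          exact mul_le_mul_of_nonneg_left (h3.trans h4) (by positivity)
      _ = 1 / (Real.pi * (R - 1) ^ 2) * ∫ ζ in S, |f ζ - g ζ| := by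
          rw [one_div, one_div, one_div, mul_inv]; ring
  -- apply exp Lipschitz bound
  have hmain : ‖Epol f z w - Epol g z w‖ ≤
      Real.exp (1 / (R - 1) ^ 2) * (1 / (Real.pi * (R - 1) ^ 2) * ∫ ζ in S, |f ζ - g ζ|) := by
    have hE : Epol f z w - Epol g z w = Complex.exp a - Complex.exp b := by
      rw [Epol, Epol, ha, hb, hF, hG]
    rw [hE]
    calc ‖Complex.exp a - Complex.exp b‖ ≤ Real.exp (1 / (R - 1) ^ 2) * ‖a - b‖ :=
          exp_lip haM hbM
      _ ≤ Real.exp (1 / (R - 1) ^ 2) * (1 / (Real.pi * (R - 1) ^ 2) * ∫ ζ in S, |f ζ - g ζ|) :=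
          mul_le_mul_of_nonneg_left hab (Real.exp_nonneg _)
  refine hmain.trans ?_
  rw [show 2 / (Real.pi * (R - 1) ^ 2) * Real.exp (4 / (Real.pi * (R - 1) ^ 2)) *
      (∫ ζ in S, |f ζ - g ζ|) = Real.exp (4 / (Real.pi * (R - 1) ^ 2)) *
      (2 / (Real.pi * (R - 1) ^ 2) * ∫ ζ in S, |f ζ - g ζ|) by ring]
  have hexp : Real.exp (1 / (R - 1) ^ 2) ≤ Real.exp (4 / (Real.pi * (R - 1) ^ 2)) := by
    refine Real.exp_le_exp.2 ?_
    rw [div_le_div_iff₀ hd (by positivity)]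
    nlinarith [Real.pi_le_four]
  have hcoef : 1 / (Real.pi * (R - 1) ^ 2) * (∫ ζ in S, |f ζ - g ζ|) ≤
      2 / (Real.pi * (R - 1) ^ 2) * ∫ ζ in S, |f ζ - g ζ| := by
    refine mul_le_mul_of_nonneg_right ?_ hL0
    gcongr
    norm_num
  calc Real.exp (1 / (R - 1) ^ 2) * (1 / (Real.pi * (R - 1) ^ 2) * ∫ ζ in S, |f ζ - g ζ|)
      ≤ Real.exp (4 / (Real.pi * (R - 1) ^ 2)) *
        (1 / (Real.pi * (R - 1) ^ 2) * ∫ ζ in S, |f ζ - g ζ|) := by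
        exact mul_le_mul_of_nonneg_right hexp (by positivity)
    _ ≤ Real.exp (4 / (Real.pi * (R - 1) ^ 2)) *
        (2 / (Real.pi * (R - 1) ^ 2) * ∫ ζ in S, |f ζ - g ζ|) :=
        mul_le_mul_of_nonneg_left hcoef (Real.exp_nonneg _)
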